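/- Let B be a symmetric bilinear form on V that is nilpotent with respect to a null vector l, and let B̂ : V → V be the unique linear endomorphism with g(B̂v, w) = B(v,w) for all v,w ∈ V. Then B̂ ∘ B̂ = 0 if and only if B(w,v) = 0 for every w ∈ {l}⊥ and every v ∈ V. -/

import Mathlib

/-- Let `B` be a symmetric bilinear form on a Lorentzian vector space `(V, g)`,
nilpotent with respect to a null vector `l`, and let `B̂` be the unique endomorphism with
`g (B̂ v) w = B v w`.  Then `B̂ ∘ B̂ = 0` iff `B w v = 0` for every `w ∈ {l}⊥` and every `v`. -/
theorem stmt6 {V : Type*} [AddCommGroup V] [Module ℝ V]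
    {n : ℕ} (hn : 2 ≤ n)
    (g : V →ₗ[ℝ] V →ₗ[ℝ] ℝ)
    (hg_symm : ∀ x y : V, g x y = g y x)
    (b : Module.Basis (Fin n) ℝ V)
    (hb : ∀ i j : Fin n, g (b i) (b j) =
      if i = j then (if (i : ℕ) = 0 then (-1 : ℝ) else 1) else 0)
    (B : V →ₗ[ℝ] V →ₗ[ℝ] ℝ)
    (hB_symm : ∀ x y : V, B x y = B y x)
    (l : V) (hl : l ≠ 0 ∧ g l l = 0)
    (hnil : (∀ z : V, B l z = 0) ∧
      (∀ w w' : V, g l w = 0 → g l w' = 0 → B w w' = 0))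
    (Bhat : V →ₗ[ℝ] V)
    (hBhat : ∀ v w : V, g (Bhat v) w = B v w) :
    Bhat ∘ₗ Bhat = 0 ↔ ∀ w : V, g l w = 0 → ∀ v : V, B w v = 0 := by
  -- coordinate formula for g
  have gsum : ∀ x y : V, g x y =
      ∑ i : Fin n, (if (i:ℕ) = 0 then (-1:ℝ) else 1) * (b.repr x i * b.repr y i) := by
    intro x y
    nth_rewrite 1 [← b.sum_repr x]
    nth_rewrite 1 [← b.sum_repr y]
    simp only [map_sum, LinearMap.sum_apply]
    simp only [map_smul, LinearMap.smul_apply, map_sum, smul_eq_mul, Finset.mul_sum, hb]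
    rw [Finset.sum_comm]
    refine Finset.sum_congr rfl fun i _ => ?_
    rw [Finset.sum_eq_single i]
    · simp; ring
    · intro j _ hj; simp [hj.symm]
    · simp
  -- nondegeneracy
  have hnondeg : ∀ x : V, (∀ w : V, g x w = 0) → x = 0 := by
    intro x hx
    have hc : ∀ i : Fin n, b.repr x i = 0 := by
      intro i
      have h := hx (b i)
      rw [gsum] at h
      rw [Finset.sum_eq_single i] at h
      · simp only [Module.Basis.repr_self, Finsupp.single_eq_same] at h
        rcases eq_or_ne (i:ℕ) 0 with h0 | h0 <;> simp [h0] at h <;> linarith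
      · intro j _ hj
        simp [Finsupp.single_eq_of_ne' (Ne.symm hj)]
      · simp
    have : b.repr x = 0 := Finsupp.ext fun i => hc i
    simpa using congrArg b.repr.symm this
  -- key Lorentzian lemma: null-orthogonal null vectors are multiples of l
  have lemB : ∀ u : V, g l u = 0 → g u u = 0 → ∃ t : ℝ, u = t • l := by
    intro u hlu huu
    have h0n : 0 < n := by omega
    set i0 : Fin n := ⟨0, h0n⟩ with hi0
    set L : Fin n → ℝ := fun i => b.repr l i with hL
    set U : Fin n → ℝ := fun i => b.repr u i with hU
    set S : Finset (Fin n) := Finset.univ.erase i0 with hS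
    have hsplit : ∀ (f : Fin n → ℝ), ∑ i : Fin n, (if (i:ℕ) = 0 then (-1:ℝ) else 1) * f i
        = -(f i0) + ∑ i ∈ S, f i := by
      intro f
      rw [← Finset.add_sum_erase _ _ (Finset.mem_univ i0)]
      congr 1
      · simp [hi0]
      · refine Finset.sum_congr rfl fun i hi => ?_
        have : (i:ℕ) ≠ 0 := by
          intro h
          exact (Finset.mem_erase.mp hi).1 (Fin.ext h)
        simp [this]
    have hLL : ∑ i ∈ S, L i * L i = L i0 * L i0 := by
      have := hl.2; rw [gsum, hsplit] at this; linarith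
    have hUU : ∑ i ∈ S, U i * U i = U i0 * U i0 := by
      have := huu; rw [gsum, hsplit] at this; linarith
    have hLU : ∑ i ∈ S, L i * U i = L i0 * U i0 := by
      have := hlu; rw [gsum, hsplit] at this; linarith
    have hsq : ∑ i ∈ S, (U i0 * L i - L i0 * U i)^2 = 0 := by
      have expand : ∀ i, (U i0 * L i - L i0 * U i)^2
          = U i0^2 * (L i * L i) - (2 * (U i0 * L i0)) * (L i * U i)
            + L i0^2 * (U i * U i) := by
        intro i; ring
      rw [Finset.sum_congr rfl fun i _ => expand i]
      rw [Finset.sum_add_distrib, Finset.sum_sub_distrib, ← Finset.mul_sum,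
        ← Finset.mul_sum, ← Finset.mul_sum, hLL, hUU, hLU]
      ring
    have hprop : ∀ i ∈ S, U i0 * L i = L i0 * U i := by
      intro i hi
      have := (Finset.sum_eq_zero_iff_of_nonneg (fun i _ => sq_nonneg _)).mp hsq i hi
      have := sq_eq_zero_iff.mp this
      linarith
    have hall : ∀ i : Fin n, U i0 * L i = L i0 * U i := by
      intro i
      rcases eq_or_ne i i0 with rfl | hi
      · ring
      · exact hprop i (Finset.mem_erase.mpr ⟨hi, Finset.mem_univ i⟩)
    have hL0 : L i0 ≠ 0 := by
      intro h0
      apply hl.1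
      have hz : ∀ i ∈ S, L i * L i = 0 := by
        refine (Finset.sum_eq_zero_iff_of_nonneg (fun i _ => mul_self_nonneg _)).mp ?_
        rw [hLL, h0]; ring
      have hc : ∀ i : Fin n, b.repr l i = 0 := by
        intro i
        rcases eq_or_ne i i0 with rfl | hi
        · exact h0
        · exact mul_self_eq_zero.mp (hz i (Finset.mem_erase.mpr ⟨hi, Finset.mem_univ i⟩))
      have : b.repr l = 0 := Finsupp.ext fun i => hc i
      simpa using congrArg b.repr.symm this
    refine ⟨U i0 / L i0, ?_⟩
    have hsm : L i0 • u = U i0 • l := by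
      have : b.repr (L i0 • u) = b.repr (U i0 • l) := by
        refine Finsupp.ext fun i => ?_
        simp only [map_smul, Finsupp.smul_apply, smul_eq_mul]
        change L i0 * U i = U i0 * L i
        linarith [hall i]
      simpa using congrArg b.repr.symm this
    rw [div_eq_mul_inv, mul_comm, mul_smul, ← hsm, smul_smul, inv_mul_cancel₀ hL0, one_smul]
  constructor
  · intro h w hw v
    have hzero : ∀ x w' : V, B (Bhat x) w' = 0 := by
      intro x w'
      have : Bhat (Bhat x) = 0 := by
        have := congrArg (fun f => f x) (congrArg DFunLike.coe h)
        simpa using this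
      rw [← hBhat, this]
      simp
    -- Bhat k is a multiple of l, where k is chosen with g l k = 1
    have hlk : ∃ k : V, g l k = 1 := by
      by_contra hk
      push_neg at hk
      apply hl.1
      apply hnondeg
      intro w'
      by_contra hw'
      exact hk ((g l w')⁻¹ • w') (by rw [map_smul, smul_eq_mul, inv_mul_cancel₀ hw'])
    obtain ⟨k, hk⟩ := hlk
    have hlBk : g l (Bhat k) = 0 := by
      rw [hg_symm, hBhat, hB_symm]; exact hnil.1 k
    have hBkBk : g (Bhat k) (Bhat k) = 0 := by
      rw [hBhat, hB_symm]; exact hzero k k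
    obtain ⟨s, hs⟩ := lemB (Bhat k) hlBk hBkBk
    have hwk : B w k = 0 := by
      rw [hB_symm, ← hBhat, hs, map_smul, LinearMap.smul_apply, smul_eq_mul,
        hw, mul_zero]
    have hdecomp : v = g l v • k + (v - g l v • k) := by abel
    have hlw' : g l (v - g l v • k) = 0 := by
      simp [map_sub, map_smul, hk]
    calc B w v = B w (g l v • k + (v - g l v • k)) := by rw [← hdecomp]
    _ = g l v * B w k + B w (v - g l v • k) := by simp
    _ = 0 := by rw [hwk, hnil.2 w _ hw hlw']; ring
  · intro h
    ext v
    simp only [LinearMap.comp_apply, LinearMap.zero_apply]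
    apply hnondeg
    intro w'
    rw [hBhat]
    have hlBv : g l (Bhat v) = 0 := by
      rw [hg_symm, hBhat, hB_symm]; exact hnil.1 v
    exact h (Bhat v) hlBv w'
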